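/- Let A_k with a_1 = 1 be a symmetric basis (a_i + a_{k-i} = a_k for 1 ≤ i ≤ k-1), and suppose every integer in [0, a_k] and in [(h_0−1)a_k, h_0·a_k] is a sum of at most h_0 elements of A_k. Then for every integer m with 1 ≤ m ≤ h_0 − 2, every integer in [m·a_k, (m+1)·a_k] is a sum of at most 2h_0 − 2 elements of A_k. -/

import Mathlib

/-- `n` is a sum of at most `h` elements of the basis `a 1, …, a k`
(repetition allowed), expressed with coefficients. -/
def RepIdx (a : ℕ → ℕ) (k h n : ℕ) : Prop :=
  ∃ c : ℕ → ℕ, (∑ i ∈ Finset.Icc 1 k, c i) ≤ h ∧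
    (∑ i ∈ Finset.Icc 1 k, c i * a i) = n

theorem stmt6 (a : ℕ → ℕ) (k h₀ : ℕ) (hk : 2 ≤ k)
    (ha1 : a 1 = 1)
    (hmono : ∀ i j, 1 ≤ i → i < j → j ≤ k → a i < a j)
    (hsymm : ∀ i, 1 ≤ i → i ≤ k - 1 → a i + a (k - i) = a k)
    (hcov1 : ∀ x, x ≤ a k → RepIdx a k h₀ x)
    (hcov2 : ∀ x, (h₀ - 1) * a k ≤ x → x ≤ h₀ * a k → RepIdx a k h₀ x) :
    ∀ m, 1 ≤ m → m ≤ h₀ - 2 →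
      ∀ x, m * a k ≤ x → x ≤ (m + 1) * a k →
        RepIdx a k (2 * h₀ - 2) x := by
  intro m hm1 hm2 x hx1 hx2
  have hr : x - m * a k ≤ a k := by
    have := Nat.sub_le_sub_right hx2 (m * a k)
    simpa [add_mul, one_mul, Nat.add_sub_cancel_left] using this
  obtain ⟨c, hc1, hc2⟩ := hcov1 (x - m * a k) hr
  have hkmem : k ∈ Finset.Icc 1 k := Finset.mem_Icc.mpr ⟨by omega, le_rfl⟩
  refine ⟨fun i => c i + if i = k then m else 0, ?_, ?_⟩
  · have : (∑ i ∈ Finset.Icc 1 k, (c i + if i = k then m else 0))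
        = (∑ i ∈ Finset.Icc 1 k, c i) + m := by
      rw [Finset.sum_add_distrib, Finset.sum_ite_eq' _ _ (fun _ => m)]
      simp [hkmem]
    rw [this]
    omega
  · have : (∑ i ∈ Finset.Icc 1 k, (c i + if i = k then m else 0) * a i)
        = (∑ i ∈ Finset.Icc 1 k, c i * a i) + m * a k := by
      have : ∀ i, (c i + if i = k then m else 0) * a i
          = c i * a i + (if i = k then m * a k else 0) := by
        intro i
        by_cases hi : i = k <;> simp [hi, add_mul]
      rw [Finset.sum_congr rfl fun i _ => this i, Finset.sum_add_distrib,
        Finset.sum_ite_eq' _ _ (fun _ => m * a k)]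
      simp [hkmem]
    rw [this, hc2]
    omega
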